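/- If the Narayana representation of i is N_{d_1} + N_{d_2} + ... + N_{d_t} with d_1 > d_2 > ... > d_t, then the prefix of length i of the Narayana word n equals the concatenation ν^{d_1}(0) ν^{d_2}(0) ⋯ ν^{d_t}(0). -/

import Mathlib

def nu : Fin 3 → List (Fin 3) := fun a => if a = 0 then [0, 1] else if a = 1 then [2] else [0]

def nuPow (k : ℕ) : List (Fin 3) := (fun w => w.flatMap nu)^[k] [0]


def nara : ℕ → ℕ
  | 0 => 1
  | 1 => 2
  | 2 => 3
  | (i+3) => nara (i+2) + nara i


def nword (i : ℕ) : Fin 3 := (nuPow (i+2)).getD i 0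

lemma nuPow_succ (k : ℕ) : nuPow (k+1) = (nuPow k).flatMap nu := by
  simp [nuPow, Function.iterate_succ_apply']

lemma nuPow_rec : ∀ k : ℕ, nuPow (k+3) = nuPow (k+2) ++ nuPow k
  | 0 => by decide
  | (k+1) => by
    rw [nuPow_succ (k+3), nuPow_rec k, List.flatMap_append, ← nuPow_succ, ← nuPow_succ,
        nuPow_rec k, List.append_assoc]

lemma nuPow_prefix_succ : ∀ k : ℕ, nuPow k <+: nuPow (k+1)
  | 0 => by decide
  | (k+1) => by
    obtain ⟨t, ht⟩ := nuPow_prefix_succ k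
    refine ⟨t.flatMap nu, ?_⟩
    rw [nuPow_succ, nuPow_succ, ← ht, List.flatMap_append]

lemma nuPow_prefix_le {j k : ℕ} (h : j ≤ k) : nuPow j <+: nuPow k := by
  induction h with
  | refl => exact List.prefix_refl _
  | step _ ih => exact ih.trans (nuPow_prefix_succ _)

lemma length_nuPow : ∀ k : ℕ, (nuPow k).length = nara k
  | 0 => rfl
  | 1 => rfl
  | 2 => rfl
  | (k+3) => by
    rw [nuPow_rec, List.length_append, length_nuPow (k+2), length_nuPow k]
    rfl

lemma nara_ge : ∀ k : ℕ, k + 1 ≤ nara k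
  | 0 => le_refl _
  | 1 => le_refl _
  | 2 => by norm_num [nara]
  | (k+3) => by
    have h1 := nara_ge (k+2)
    have h2 := nara_ge k
    show k + 4 ≤ nara (k+2) + nara k
    omega

lemma nword_eq {M j : ℕ} (h : j + 2 ≤ M) : nword j = (nuPow M).getD j 0 := by
  obtain ⟨t, ht⟩ := nuPow_prefix_le h
  have hl : j < (nuPow (j+2)).length := by
    rw [length_nuPow]; have := nara_ge (j+2); omega
  rw [nword, ← ht, List.getD_append _ _ _ _ hl]

lemma range_map_nword {M i : ℕ} (h : i + 2 ≤ M) :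
    (List.range i).map nword = (nuPow M).take i := by
  have hlen : i ≤ (nuPow M).length := by
    rw [length_nuPow]; have := nara_ge M; omega
  apply List.ext_getElem
  · simp [Nat.min_eq_left hlen]
  · intro j h1 h2
    simp only [List.getElem_map, List.getElem_range, List.getElem_take]
    have hj : j < i := by simpa using h1
    rw [nword_eq (by omega : j + 2 ≤ M), List.getD_eq_getElem _ _ (by omega)]

lemma flatten_prefix : ∀ (d : List ℕ) (k : ℕ),
    (k :: d).Chain' (fun a b => b + 3 ≤ a) →
    ((k :: d).map nuPow).flatten <+: nuPow (k+1)
  | [], k, _ => by simpa using nuPow_prefix_le (Nat.le_succ k)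
  | (j :: d'), k, hc => by
    rw [List.Chain', List.isChain_cons_cons] at hc
    obtain ⟨hjk, hc'⟩ := hc
    have ih := flatten_prefix d' j hc'
    have h1 : ((j :: d').map nuPow).flatten <+: nuPow (k - 2) :=
      ih.trans (nuPow_prefix_le (by omega))
    obtain ⟨t, ht⟩ := h1
    have hk : k - 2 + 3 = k + 1 := by omega
    have hrec : nuPow (k+1) = nuPow k ++ nuPow (k-2) := by
      have := nuPow_rec (k-2)
      rwa [hk, (by omega : k - 2 + 2 = k)] at this
    refine ⟨t, ?_⟩
    rw [List.map_cons, List.flatten_cons, hrec, ← ht, List.append_assoc]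

theorem prefix_factorization (i : ℕ) (d : List ℕ)
    (hgap : d.Chain' (fun a b => b + 3 ≤ a))
    (hsum : (d.map nara).sum = i) :
    (d.map nuPow).flatten = (List.range i).map nword := by
  cases d with
  | nil => simp at hsum; simp [← hsum]
  | cons k rest =>
    set w := ((k :: rest).map nuPow).flatten with hw
    have hlen : w.length = i := by
      rw [hw, List.length_flatten, List.map_map]
      rw [← hsum]
      congr 1
      simp [Function.comp, length_nuPow]
    set M := max (k+1) (i+2) with hM
    have hpre : w <+: nuPow M :=
      (flatten_prefix rest k hgap).trans (nuPow_prefix_le (le_max_left _ _))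
    have : w = (nuPow M).take i := by
      have := List.prefix_iff_eq_take.mp hpre
      rwa [hlen] at this
    rw [this, range_map_nword (le_max_right _ _)]
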